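/- Let E be a finite-dimensional real inner product space, u : E × ℝ → E a velocity field, μ : E × ℝ → ℝ with μ(p) ≥ 0 everywhere, and k > 0, ν > 0. Let X : ℝ → E be a differentiable characteristic curve with X′(t) = u(X(t), t) for all t, and suppose c̄ : E × ℝ → ℝ is differentiable at every point (X(t), t) with material derivative there equal to k·μ(X(t), t). If c̄(X(t₀), t₀) ≥ 0 for some t₀, then the concentration c := ν(1 − exp(−c̄/k)) satisfies 0 ≤ c(X(t), t) < ν for all t ≥ t₀; that is, the change of variable together with the transformed equation preserves the physical constraints along characteristics. -/

import Mathlib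

/-- Along a characteristic curve `X` with `X' t = u (X t, t)`, if the
transformed variable `c̄` solves the transformed equation (material derivative
equal to `k μ ≥ 0`) and `c̄ (X t₀, t₀) ≥ 0`, then the concentration
`c := ν (1 - exp (-c̄ / k))` satisfies the physical constraints
`0 ≤ c (X t, t) < ν` for all `t ≥ t₀`. -/
theorem change_of_variable_preserves_constraints_along_characteristics
    {E : Type*} [NormedAddCommGroup E] [InnerProductSpace ℝ E]
    [FiniteDimensional ℝ E]
    (u : E × ℝ → E) (μ : E × ℝ → ℝ) (hμ : ∀ p, 0 ≤ μ p)
    (k ν : ℝ) (hk : 0 < k) (hν : 0 < ν)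
    (X : ℝ → E) (hX : ∀ t, HasDerivAt X (u (X t, t)) t)
    (cb : E × ℝ → ℝ)
    (hdiff : ∀ t, DifferentiableAt ℝ cb (X t, t))
    (heq : ∀ t, fderiv ℝ cb (X t, t) (u (X t, t), 1) = k * μ (X t, t))
    (t₀ : ℝ) (h0 : 0 ≤ cb (X t₀, t₀)) :
    ∀ t ≥ t₀, 0 ≤ ν * (1 - Real.exp (-(cb (X t, t)) / k)) ∧
      ν * (1 - Real.exp (-(cb (X t, t)) / k)) < ν := by

  set g : ℝ → ℝ := fun t => cb (X t, t) with hg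
  have hgd : ∀ t, HasDerivAt g (k * μ (X t, t)) t := by
    intro t
    have hXt : HasDerivAt (fun s => (X s, s)) (u (X t, t), 1) t :=
      (hX t).prodMk (hasDerivAt_id t)
    have h2 : HasDerivAt (cb ∘ fun s => (X s, s))
        (fderiv ℝ cb (X t, t) (u (X t, t), 1)) t :=
      HasFDerivAt.comp_hasDerivAt t ((hdiff t).hasFDerivAt) (f := fun s => (X s, s)) hXt
    simpa [Function.comp_def, heq t, hg] using h2
  have hmono : Monotone g := by
    apply monotone_of_deriv_nonneg
    · exact fun t => (hgd t).differentiableAt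
    · intro t
      rw [(hgd t).deriv]
      exact mul_nonneg hk.le (hμ _)
  intro t ht
  have hge : 0 ≤ g t := h0.trans (hmono ht)
  have h1 : Real.exp (-(g t) / k) ≤ 1 := by
    rw [Real.exp_le_one_iff]
    exact div_nonpos_of_nonpos_of_nonneg (neg_nonpos.mpr hge) hk.le
  constructor
  · exact mul_nonneg hν.le (by linarith)
  · have := Real.exp_pos (-(g t) / k)
    nlinarith
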